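/- Forward regression prediction bound (Theorem 1, first part): under Algorithm 1 with threshold t, the forward regression estimator θ̂ satisfies E_n[(x_i'θ_0 - x_i'θ̂)²]^{1/2} ≤ √(ŝ + s_0) · φ_min(ŝ+s_0)(G_x)^{-1} · (2‖E_n[ε_i x_i']‖_∞ + t^{1/2}), where ŝ = |Ŝ| is the number of selected covariates. -/
import Mathlib


/-- Minimal empirical squared loss over coefficient vectors supported in `S`. -/
noncomputable def loss {n p : ℕ} (x : Fin n → Fin p → ℝ) (y : Fin n → ℝ)
    (S : Finset (Fin p)) : ℝ :=
  sInf {r : ℝ | ∃ θ : Fin p → ℝ, (∀ j ∉ S, θ j = 0) ∧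
    r = (1 / (n : ℝ)) * ∑ i, (y i - ∑ j, x i j * θ j) ^ 2}

/-- Minimum `s`-sparse eigenvalue of `G` (Rayleigh quotient form). -/
noncomputable def phiMin {p : ℕ} (G : Matrix (Fin p) (Fin p) ℝ) (s : ℕ) : ℝ :=
  sInf {r : ℝ | ∃ v : Fin p → ℝ, (∑ i, v i ^ 2) = 1 ∧
    (Finset.univ.filter (fun i => v i ≠ 0)).card ≤ s ∧
    r = ∑ i, ∑ j, v i * G i j * v j}

/-- `Shat` is a possible output of Algorithm 1 (forward regression with
threshold `t`): starting from the empty set, repeatedly add a covariate `j`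
maximizing the loss decrease `-Δ_jℓ(S) = ℓ(S) - ℓ(S ∪ {j})` provided this
maximal decrease exceeds `t`; stop when no decrease exceeds `t`. -/
def IsForwardRegression {n p : ℕ} (x : Fin n → Fin p → ℝ) (y : Fin n → ℝ)
    (t : ℝ) (Shat : Finset (Fin p)) : Prop :=
  ∃ (k : ℕ) (F : ℕ → Finset (Fin p)),
    F 0 = ∅ ∧ F k = Shat ∧
    (∀ i < k, ∃ j ∉ F i,
      loss x y (F i) - loss x y (insert j (F i)) > t ∧
      (∀ j', loss x y (F i) - loss x y (insert j' (F i)) ≤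
        loss x y (F i) - loss x y (insert j (F i))) ∧
      F (i + 1) = insert j (F i)) ∧
    (∀ j ∉ Shat, loss x y Shat - loss x y (insert j Shat) ≤ t)

/- ### Auxiliary lemmas -/

lemma loss_le {n p : ℕ} (x : Fin n → Fin p → ℝ) (y : Fin n → ℝ)
    (S : Finset (Fin p)) (θ : Fin p → ℝ) (hθ : ∀ j ∉ S, θ j = 0) :
    loss x y S ≤ (1 / (n : ℝ)) * ∑ i, (y i - ∑ j, x i j * θ j) ^ 2 := by
  apply csInf_le
  · refine ⟨0, ?_⟩
    rintro r ⟨θ', -, rfl⟩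
    positivity
  · exact ⟨θ, hθ, rfl⟩

lemma perturb {n p : ℕ} (x : Fin n → Fin p → ℝ) (y : Fin n → ℝ)
    (θ : Fin p → ℝ) (j : Fin p) (c : ℝ) :
    (1 / (n : ℝ)) * ∑ i, (y i - ∑ k, x i k * (θ k + if k = j then c else 0)) ^ 2
      = (1 / (n : ℝ)) * ∑ i, (y i - ∑ k, x i k * θ k) ^ 2
        - 2 * c * ((1 / (n : ℝ)) * ∑ i, x i j * (y i - ∑ k, x i k * θ k))
        + c ^ 2 * ((1 / (n : ℝ)) * ∑ i, x i j ^ 2) := by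
  have h1 : ∀ i, ∑ k, x i k * (θ k + if k = j then c else 0)
      = (∑ k, x i k * θ k) + x i j * c := by
    intro i
    simp [mul_add, Finset.sum_add_distrib, mul_ite, mul_zero, Finset.sum_ite_eq']
  have h2 : ∑ i, (y i - ((∑ k, x i k * θ k) + x i j * c)) ^ 2
      = ∑ i, ((y i - ∑ k, x i k * θ k) ^ 2 - 2 * c * (x i j * (y i - ∑ k, x i k * θ k))
          + c ^ 2 * x i j ^ 2) :=
    Finset.sum_congr rfl fun i _ => by ring
  simp only [h1, h2, Finset.sum_add_distrib, Finset.sum_sub_distrib, ← Finset.mul_sum]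
  ring

lemma sum_swap_lin {n p : ℕ} (x : Fin n → Fin p → ℝ) (v : Fin p → ℝ) (w : Fin n → ℝ) :
    (1 / (n : ℝ)) * ∑ i, (∑ j, x i j * v j) * w i
      = ∑ j, v j * ((1 / (n : ℝ)) * ∑ i, x i j * w i) := by
  have h : ∑ i, (∑ j, x i j * v j) * w i = ∑ j, v j * ∑ i, x i j * w i := by
    simp only [Finset.sum_mul, Finset.mul_sum]
    rw [Finset.sum_comm]
    exact Finset.sum_congr rfl fun j _ => Finset.sum_congr rfl fun i _ => by ring
  rw [h, Finset.mul_sum]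
  exact Finset.sum_congr rfl fun j _ => by ring

lemma gram_quad {n p : ℕ} (x : Fin n → Fin p → ℝ) (v : Fin p → ℝ) :
    ∑ j, ∑ k, v j * ((1 / (n : ℝ)) * ∑ i, x i j * x i k) * v k
      = (1 / (n : ℝ)) * ∑ i, (∑ j, x i j * v j) ^ 2 := by
  have h2 : ∀ j k, v j * ((1 / (n : ℝ)) * ∑ i, x i j * x i k) * v k
      = (1 / (n : ℝ)) * ∑ i, (x i j * v j) * (x i k * v k) := by
    intro j k
    have h3 : (∑ i, x i j * x i k) * (v j * v k) = ∑ i, (x i j * v j) * (x i k * v k) := by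
      rw [Finset.sum_mul]; exact Finset.sum_congr rfl fun i _ => by ring
    calc v j * ((1 / (n : ℝ)) * ∑ i, x i j * x i k) * v k
        = (1 / (n : ℝ)) * ((∑ i, x i j * x i k) * (v j * v k)) := by ring
      _ = (1 / (n : ℝ)) * ∑ i, (x i j * v j) * (x i k * v k) := by rw [h3]
  have h4 : ∀ i : Fin n, (∑ j, x i j * v j) ^ 2
      = ∑ j, ∑ k, (x i j * v j) * (x i k * v k) := by
    intro i; rw [sq]; exact Finset.sum_mul_sum Finset.univ Finset.univ _ _
  have key : ∑ j, ∑ k, ∑ i, (x i j * v j) * (x i k * v k)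
      = ∑ i, ∑ j, ∑ k, (x i j * v j) * (x i k * v k) :=
    calc ∑ j, ∑ k, ∑ i, (x i j * v j) * (x i k * v k)
        = ∑ j, ∑ i, ∑ k, (x i j * v j) * (x i k * v k) :=
          Finset.sum_congr rfl fun j _ => Finset.sum_comm
      _ = ∑ i, ∑ j, ∑ k, (x i j * v j) * (x i k * v k) := Finset.sum_comm
  calc ∑ j, ∑ k, v j * ((1 / (n : ℝ)) * ∑ i, x i j * x i k) * v k
      = ∑ j, ∑ k, (1 / (n : ℝ)) * ∑ i, (x i j * v j) * (x i k * v k) :=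
        Finset.sum_congr rfl fun j _ => Finset.sum_congr rfl fun k _ => h2 j k
    _ = ∑ j, (1 / (n : ℝ)) * ∑ k, ∑ i, (x i j * v j) * (x i k * v k) :=
        Finset.sum_congr rfl fun j _ => (Finset.mul_sum _ _ _).symm
    _ = (1 / (n : ℝ)) * ∑ j, ∑ k, ∑ i, (x i j * v j) * (x i k * v k) :=
        (Finset.mul_sum _ _ _).symm
    _ = (1 / (n : ℝ)) * ∑ i, ∑ j, ∑ k, (x i j * v j) * (x i k * v k) := by rw [key]
    _ = (1 / (n : ℝ)) * ∑ i, (∑ j, x i j * v j) ^ 2 :=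
        congrArg _ (Finset.sum_congr rfl fun i _ => (h4 i).symm)

lemma gram_eq {n p : ℕ} (x : Fin n → Fin p → ℝ) (G : Matrix (Fin p) (Fin p) ℝ)
    (hG : ∀ j k, G j k = (1 / (n : ℝ)) * ∑ i, x i j * x i k) (v : Fin p → ℝ) :
    ∑ i, ∑ j, v i * G i j * v j = (1 / (n : ℝ)) * ∑ i, (∑ j, x i j * v j) ^ 2 := by
  calc ∑ i, ∑ j, v i * G i j * v j
      = ∑ i, ∑ j, v i * ((1 / (n : ℝ)) * ∑ i', x i' i * x i' j) * v j :=
        Finset.sum_congr rfl fun i _ => Finset.sum_congr rfl fun j _ => by rw [hG]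
    _ = (1 / (n : ℝ)) * ∑ i, (∑ j, x i j * v j) ^ 2 := gram_quad x v

lemma phi_set_bddBelow {n p : ℕ} (x : Fin n → Fin p → ℝ) (G : Matrix (Fin p) (Fin p) ℝ)
    (hG : ∀ j k, G j k = (1 / (n : ℝ)) * ∑ i, x i j * x i k) (s : ℕ) :
    BddBelow {r : ℝ | ∃ v : Fin p → ℝ, (∑ i, v i ^ 2) = 1 ∧
      (Finset.univ.filter (fun i => v i ≠ 0)).card ≤ s ∧
      r = ∑ i, ∑ j, v i * G i j * v j} := by
  refine ⟨0, ?_⟩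
  rintro r ⟨v, -, -, rfl⟩
  rw [gram_eq x G hG v]
  positivity

lemma rayleigh_bound {n p : ℕ} (x : Fin n → Fin p → ℝ) (G : Matrix (Fin p) (Fin p) ℝ)
    (hG : ∀ j k, G j k = (1 / (n : ℝ)) * ∑ i, x i j * x i k)
    (s : ℕ) (v : Fin p → ℝ)
    (hcard : (Finset.univ.filter fun j => v j ≠ 0).card ≤ s) :
    phiMin G s * (∑ j, v j ^ 2) ≤ (1 / (n : ℝ)) * ∑ i, (∑ j, x i j * v j) ^ 2 := by
  by_cases hv : ∀ j, v j = 0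
  · simp [hv]
  · push_neg at hv
    obtain ⟨j1, hj1⟩ := hv
    set L2 : ℝ := ∑ j, v j ^ 2 with hL2
    have hL2pos : 0 < L2 := by
      rw [hL2]
      exact Finset.sum_pos' (fun j _ => sq_nonneg _) ⟨j1, Finset.mem_univ _, by positivity⟩
    set c : ℝ := Real.sqrt L2 with hc
    have hcpos : 0 < c := Real.sqrt_pos.mpr hL2pos
    have hc2 : c ^ 2 = L2 := Real.sq_sqrt hL2pos.le
    have hmem : phiMin G s ≤ ∑ i, ∑ j, (v i / c) * G i j * (v j / c) := by
      apply csInf_le (phi_set_bddBelow x G hG s)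
      refine ⟨fun j => v j / c, ?_, ?_, rfl⟩
      · have h1 : ∑ j, (v j / c) ^ 2 = (∑ j, v j ^ 2) / c ^ 2 := by
          rw [Finset.sum_div]
          exact Finset.sum_congr rfl fun j _ => (div_pow _ _ _)
        rw [h1, hc2, ← hL2]
        exact div_self hL2pos.ne'
      · refine le_trans (Finset.card_le_card ?_) hcard
        intro j hj
        simp only [Finset.mem_filter] at hj ⊢
        refine ⟨hj.1, fun h0 => hj.2 ?_⟩
        show v j / c = 0
        rw [h0, zero_div]
    have hval : ∑ i, ∑ j, (v i / c) * G i j * (v j / c)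
        = ((1 / (n : ℝ)) * ∑ i, (∑ j, x i j * v j) ^ 2) / L2 := by
      have h7 : ∀ i j, (v i / c) * G i j * (v j / c) = (v i * G i j * v j) / L2 := by
        intro i j
        rw [← hc2, sq]
        field_simp
      calc ∑ i, ∑ j, (v i / c) * G i j * (v j / c)
          = ∑ i, ∑ j, (v i * G i j * v j) / L2 :=
            Finset.sum_congr rfl fun i _ => Finset.sum_congr rfl fun j _ => h7 i j
        _ = (∑ i, ∑ j, v i * G i j * v j) / L2 := by
            rw [Finset.sum_div]
            exact Finset.sum_congr rfl fun i _ => (Finset.sum_div _ _ _).symm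
        _ = ((1 / (n : ℝ)) * ∑ i, (∑ j, x i j * v j) ^ 2) / L2 := by
            rw [gram_eq x G hG v]
    rw [hval] at hmem
    rw [mul_comm]
    calc L2 * phiMin G s
        ≤ L2 * (((1 / (n : ℝ)) * ∑ i, (∑ j, x i j * v j) ^ 2) / L2) :=
          mul_le_mul_of_nonneg_left hmem hL2pos.le
      _ = (1 / (n : ℝ)) * ∑ i, (∑ j, x i j * v j) ^ 2 :=
          mul_div_cancel₀ _ hL2pos.ne'

lemma key_bound {n p : ℕ} (x : Fin n → Fin p → ℝ) (v : Fin p → ℝ) (s : ℕ)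
    (hcard : (Finset.univ.filter fun j => v j ≠ 0).card ≤ s)
    (B φ : ℝ) (hB : 0 ≤ B) (hφ0 : 0 < φ) (hφ1 : φ ≤ 1)
    (hray : φ * (∑ j, v j ^ 2) ≤ (1 / (n : ℝ)) * ∑ i, (∑ j, x i j * v j) ^ 2)
    (hcj : ∀ j, |(1 / (n : ℝ)) * ∑ i, x i j * (∑ k, x i k * v k)| ≤ B) :
    Real.sqrt ((1 / (n : ℝ)) * ∑ i, (∑ j, x i j * v j) ^ 2)
      ≤ Real.sqrt s * φ⁻¹ * B := by
  set T : Finset (Fin p) := Finset.univ.filter fun j => v j ≠ 0 with hT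
  set Q : ℝ := (1 / (n : ℝ)) * ∑ i, (∑ j, x i j * v j) ^ 2 with hQ
  have hQ0 : 0 ≤ Q := by rw [hQ]; positivity
  set L : ℝ := Real.sqrt (∑ j, v j ^ 2) with hL
  have hL0 : 0 ≤ L := Real.sqrt_nonneg _
  have hsum0 : (0:ℝ) ≤ ∑ j, v j ^ 2 := by positivity
  have hL2 : L ^ 2 = ∑ j, v j ^ 2 := Real.sq_sqrt hsum0
  have hQsum : Q = ∑ j, v j * ((1 / (n : ℝ)) * ∑ i, x i j * (∑ k, x i k * v k)) := by
    rw [hQ, ← sum_swap_lin x v (fun i => ∑ k, x i k * v k)]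
    congr 1
    exact Finset.sum_congr rfl fun i _ => sq (∑ j, x i j * v j)
  have hT2 : ∑ j ∈ T, |v j| ≤ Real.sqrt s * L := by
    have hcs : (∑ j ∈ T, |v j|) ^ 2 ≤ (s : ℝ) * ∑ j, v j ^ 2 := by
      calc (∑ j ∈ T, |v j|) ^ 2 ≤ (T.card : ℝ) * ∑ j ∈ T, |v j| ^ 2 := by
            exact_mod_cast sq_sum_le_card_mul_sum_sq (s := T) (f := fun j => |v j|)
        _ ≤ (s : ℝ) * ∑ j, v j ^ 2 := by
            apply mul_le_mul
            · exact_mod_cast hcard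
            · calc ∑ j ∈ T, |v j| ^ 2 = ∑ j ∈ T, v j ^ 2 :=
                    Finset.sum_congr rfl fun j _ => sq_abs _
                _ ≤ ∑ j, v j ^ 2 :=
                    Finset.sum_le_sum_of_subset_of_nonneg (Finset.subset_univ _)
                      (fun j _ _ => sq_nonneg _)
            · positivity
            · positivity
    have h0 : 0 ≤ ∑ j ∈ T, |v j| := Finset.sum_nonneg fun j _ => abs_nonneg _
    calc ∑ j ∈ T, |v j| = Real.sqrt ((∑ j ∈ T, |v j|) ^ 2) := (Real.sqrt_sq h0).symm
      _ ≤ Real.sqrt ((s : ℝ) * ∑ j, v j ^ 2) := Real.sqrt_le_sqrt hcs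
      _ = Real.sqrt s * L := Real.sqrt_mul (Nat.cast_nonneg _) _
  have hQle : Q ≤ Real.sqrt s * L * B := by
    have h5 : Q = ∑ j ∈ T, v j * ((1 / (n : ℝ)) * ∑ i, x i j * (∑ k, x i k * v k)) := by
      rw [hQsum, hT]
      exact (Finset.sum_filter_of_ne fun j _ hne => by
        intro h0; exact hne (by rw [h0, zero_mul])).symm
    calc Q = ∑ j ∈ T, v j * ((1 / (n : ℝ)) * ∑ i, x i j * (∑ k, x i k * v k)) := h5
      _ ≤ ∑ j ∈ T, |v j| * B := by
          apply Finset.sum_le_sum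
          intro j _
          calc v j * ((1 / (n : ℝ)) * ∑ i, x i j * (∑ k, x i k * v k))
              ≤ |v j * ((1 / (n : ℝ)) * ∑ i, x i j * (∑ k, x i k * v k))| := le_abs_self _
            _ = |v j| * |(1 / (n : ℝ)) * ∑ i, x i j * (∑ k, x i k * v k)| := abs_mul _ _
            _ ≤ |v j| * B := mul_le_mul_of_nonneg_left (hcj j) (abs_nonneg _)
      _ = (∑ j ∈ T, |v j|) * B := (Finset.sum_mul _ _ _).symm
      _ ≤ Real.sqrt s * L * B := mul_le_mul_of_nonneg_right hT2 hB
  have hLQ : L ≤ Real.sqrt Q / Real.sqrt φ := by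
    have h6 : L ^ 2 ≤ Q / φ := by
      rw [hL2, le_div_iff₀ hφ0, mul_comm]
      exact hray
    calc L = Real.sqrt (L ^ 2) := (Real.sqrt_sq hL0).symm
      _ ≤ Real.sqrt (Q / φ) := Real.sqrt_le_sqrt h6
      _ = Real.sqrt Q / Real.sqrt φ := Real.sqrt_div hQ0 _
  rcases eq_or_lt_of_le hQ0 with hQz | hQpos
  · rw [← hQz, Real.sqrt_zero]
    positivity
  · have hsqQ : 0 < Real.sqrt Q := Real.sqrt_pos.mpr hQpos
    have hsqφ : 0 < Real.sqrt φ := Real.sqrt_pos.mpr hφ0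
    have h7 : Real.sqrt Q * Real.sqrt Q ≤ (Real.sqrt s * B / Real.sqrt φ) * Real.sqrt Q := by
      calc Real.sqrt Q * Real.sqrt Q = Q := Real.mul_self_sqrt hQ0
        _ ≤ Real.sqrt s * L * B := hQle
        _ ≤ Real.sqrt s * (Real.sqrt Q / Real.sqrt φ) * B := by
            apply mul_le_mul_of_nonneg_right _ hB
            exact mul_le_mul_of_nonneg_left hLQ (Real.sqrt_nonneg _)
        _ = (Real.sqrt s * B / Real.sqrt φ) * Real.sqrt Q := by ring
    have h8 : Real.sqrt Q ≤ Real.sqrt s * B / Real.sqrt φ :=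
      le_of_mul_le_mul_right h7 hsqQ
    have h9 : (Real.sqrt φ)⁻¹ ≤ φ⁻¹ := by
      apply inv_anti₀ hφ0
      calc φ = Real.sqrt (φ ^ 2) := (Real.sqrt_sq hφ0.le).symm
        _ ≤ Real.sqrt φ := Real.sqrt_le_sqrt (by nlinarith)
    calc Real.sqrt Q ≤ Real.sqrt s * B / Real.sqrt φ := h8
      _ = Real.sqrt s * (Real.sqrt φ)⁻¹ * B := by ring
      _ ≤ Real.sqrt s * φ⁻¹ * B := by
          apply mul_le_mul_of_nonneg_right _ hB
          exact mul_le_mul_of_nonneg_left h9 (Real.sqrt_nonneg _)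

/-- Forward regression prediction bound (Theorem 1, first part): on data
`yᵢ = xᵢ'θ₀ + εᵢ` with normalized covariates, the post-forward-regression
least-squares estimator `θ̂` satisfies
`E_n[(xᵢ'θ₀ - xᵢ'θ̂)²]^{1/2} ≤ √(ŝ+s₀) φ_min(ŝ+s₀)(G_x)⁻¹ (2‖E_n[εx]‖_∞ + √t)`. -/
theorem stmt_14 (n p : ℕ) (x : Fin n → Fin p → ℝ) (y ε : Fin n → ℝ)
    (θ₀ : Fin p → ℝ) (t : ℝ) (ht : 0 < t)
    (hmodel : ∀ i, y i = (∑ j, x i j * θ₀ j) + ε i)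
    (hcenter : ∀ j, (1 / (n : ℝ)) * ∑ i, x i j = 0)
    (hnormal : ∀ j, (1 / (n : ℝ)) * ∑ i, x i j ^ 2 = 1)
    (G : Matrix (Fin p) (Fin p) ℝ)
    (hG : ∀ j k, G j k = (1 / (n : ℝ)) * ∑ i, x i j * x i k)
    (s₀ : ℕ) (hs₀ : s₀ = (Finset.univ.filter (fun j => θ₀ j ≠ 0)).card)
    (Shat : Finset (Fin p)) (hFR : IsForwardRegression x y t Shat)
    (shat : ℕ) (hshat : shat = Shat.card)
    (θhat : Fin p → ℝ) (hθhatsupp : ∀ j ∉ Shat, θhat j = 0)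
    (hθhatmin : (1 / (n : ℝ)) * ∑ i, (y i - ∑ j, x i j * θhat j) ^ 2 = loss x y Shat)
    (hφ : 0 < phiMin G (shat + s₀)) :
    Real.sqrt ((1 / (n : ℝ)) * ∑ i, ((∑ j, x i j * θ₀ j) - ∑ j, x i j * θhat j) ^ 2) ≤
      Real.sqrt ((shat : ℝ) + s₀) * (phiMin G (shat + s₀))⁻¹ *
        (2 * (⨆ j : Fin p, |(1 / (n : ℝ)) * ∑ i, ε i * x i j|) + Real.sqrt t) := by
  classical
  obtain ⟨k, F, -, -, -, hstop⟩ := hFR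
  set s : ℕ := shat + s₀ with hs
  -- the phiMin defining set is nonempty (otherwise phiMin = 0, contradicting hφ)
  have hne : {r : ℝ | ∃ v : Fin p → ℝ, (∑ i, v i ^ 2) = 1 ∧
      (Finset.univ.filter (fun i => v i ≠ 0)).card ≤ s ∧
      r = ∑ i, ∑ j, v i * G i j * v j}.Nonempty := by
    by_contra hcon
    rw [Set.not_nonempty_iff_eq_empty] at hcon
    have h0 : phiMin G s = 0 := by
      unfold phiMin
      rw [hcon]
      exact Real.sInf_empty
    rw [h0] at hφ
    exact lt_irrefl 0 hφ
  obtain ⟨r0, v0, hv01, hv0c, -⟩ := hne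
  have hp : Nonempty (Fin p) := by
    by_contra hcon
    rw [not_nonempty_iff] at hcon
    rw [Finset.univ_eq_empty, Finset.sum_empty] at hv01
    norm_num at hv01
  obtain ⟨j0⟩ := hp
  have hs1 : 1 ≤ s := by
    have hex : ∃ j, v0 j ≠ 0 := by
      by_contra hcon
      push_neg at hcon
      simp [hcon] at hv01
    obtain ⟨j, hj⟩ := hex
    exact le_trans
      (Finset.card_pos.mpr ⟨j, Finset.mem_filter.mpr ⟨Finset.mem_univ _, hj⟩⟩) hv0c
  -- phiMin ≤ 1, witnessed by a coordinate vector
  have hφ1 : phiMin G s ≤ 1 := by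
    apply csInf_le (phi_set_bddBelow x G hG s)
    refine ⟨fun q => if q = j0 then 1 else 0, ?_, ?_, ?_⟩
    · simp [ite_pow, Finset.sum_ite_eq']
    · have h1 : (Finset.univ.filter fun q => (if q = j0 then (1:ℝ) else 0) ≠ 0) = {j0} := by
        ext q; by_cases hq : q = j0 <;> simp [hq]
      rw [h1, Finset.card_singleton]
      exact hs1
    · have h1 : ∑ i, ∑ j, (if i = j0 then (1:ℝ) else 0) * G i j * (if j = j0 then 1 else 0)
          = G j0 j0 := by
        simp [ite_mul, mul_ite, zero_mul, mul_zero, Finset.sum_ite_eq']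
      rw [h1, hG,
        show ∑ i, x i j0 * x i j0 = ∑ i, x i j0 ^ 2 from
          Finset.sum_congr rfl fun i _ => (sq (x i j0)).symm]
      exact (hnormal j0).symm
  -- the sup-norm bound
  set M : ℝ := ⨆ j : Fin p, |(1 / (n : ℝ)) * ∑ i, ε i * x i j| with hM
  have hbddM : BddAbove (Set.range fun j : Fin p => |(1 / (n : ℝ)) * ∑ i, ε i * x i j|) :=
    Set.Finite.bddAbove (Set.finite_range _)
  have heM : ∀ j, |(1 / (n : ℝ)) * ∑ i, ε i * x i j| ≤ M := fun j => le_ciSup hbddM j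
  have hM0 : 0 ≤ M := le_trans (abs_nonneg _) (heM j0)
  have ht0 : 0 ≤ Real.sqrt t := Real.sqrt_nonneg t
  -- first-order conditions on the selected set
  have ha_in : ∀ j ∈ Shat,
      (1 / (n : ℝ)) * ∑ i, x i j * (y i - ∑ k, x i k * θhat k) = 0 := by
    intro j hj
    set a : ℝ := (1 / (n : ℝ)) * ∑ i, x i j * (y i - ∑ k, x i k * θhat k) with hadef
    have hsupp : ∀ q ∉ Shat, (θhat q + if q = j then a else 0) = 0 := by
      intro q hq
      have hqj : q ≠ j := fun h => hq (h ▸ hj)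
      simp [hθhatsupp q hq, hqj]
    have hkey := loss_le x y Shat (fun q => θhat q + if q = j then a else 0) hsupp
    rw [perturb, hθhatmin, hnormal j, ← hadef] at hkey
    have h2 : a ^ 2 ≤ 0 := by nlinarith [hkey]
    have h3 : a ^ 2 = 0 := le_antisymm h2 (sq_nonneg a)
    exact pow_eq_zero_iff two_ne_zero |>.mp h3
  -- stopping-rule bound off the selected set
  have ha_out : ∀ j ∉ Shat,
      |(1 / (n : ℝ)) * ∑ i, x i j * (y i - ∑ k, x i k * θhat k)| ≤ Real.sqrt t := by
    intro j hj
    set a : ℝ := (1 / (n : ℝ)) * ∑ i, x i j * (y i - ∑ k, x i k * θhat k) with hadef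
    have hsupp : ∀ q ∉ insert j Shat, (θhat q + if q = j then a else 0) = 0 := by
      intro q hq
      rw [Finset.mem_insert] at hq
      push_neg at hq
      simp [hθhatsupp q hq.2, hq.1]
    have h1 := loss_le x y (insert j Shat) (fun q => θhat q + if q = j then a else 0) hsupp
    rw [perturb, hθhatmin, hnormal j, ← hadef] at h1
    have h2 := hstop j hj
    have h3 : a ^ 2 ≤ t := by nlinarith [h1, h2]
    exact Real.abs_le_sqrt h3
  -- support cardinality of θ₀ - θhat
  have hcard : (Finset.univ.filter fun j => θ₀ j - θhat j ≠ 0).card ≤ s := by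
    have hsub : (Finset.univ.filter fun j => θ₀ j - θhat j ≠ 0)
        ⊆ Shat ∪ Finset.univ.filter fun j => θ₀ j ≠ 0 := by
      intro j hj
      rw [Finset.mem_filter] at hj
      rw [Finset.mem_union]
      by_cases h : j ∈ Shat
      · exact Or.inl h
      · refine Or.inr (Finset.mem_filter.mpr ⟨Finset.mem_univ _, ?_⟩)
        intro h0
        exact hj.2 (by rw [h0, hθhatsupp j h, sub_zero])
    calc (Finset.univ.filter fun j => θ₀ j - θhat j ≠ 0).card
        ≤ (Shat ∪ Finset.univ.filter fun j => θ₀ j ≠ 0).card := Finset.card_le_card hsub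
      _ ≤ Shat.card + (Finset.univ.filter fun j => θ₀ j ≠ 0).card := Finset.card_union_le _ _
      _ = s := by rw [hs, hshat, hs₀]
  -- decomposition of the empirical correlations
  have hw : ∀ i, (∑ q, x i q * (θ₀ q - θhat q)) = (y i - ∑ q, x i q * θhat q) - ε i := by
    intro i
    have h1 : ∑ q, x i q * (θ₀ q - θhat q)
        = (∑ q, x i q * θ₀ q) - ∑ q, x i q * θhat q := by
      rw [← Finset.sum_sub_distrib]
      exact Finset.sum_congr rfl fun q _ => by ring
    rw [h1, hmodel i]
    ring
  have hcj : ∀ j, |(1 / (n : ℝ)) * ∑ i, x i j * (∑ q, x i q * (θ₀ q - θhat q))|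
      ≤ 2 * M + Real.sqrt t := by
    intro j
    have hsplit : (1 / (n : ℝ)) * ∑ i, x i j * (∑ q, x i q * (θ₀ q - θhat q))
        = (1 / (n : ℝ)) * ∑ i, x i j * (y i - ∑ q, x i q * θhat q)
          - (1 / (n : ℝ)) * ∑ i, ε i * x i j := by
      rw [← mul_sub, ← Finset.sum_sub_distrib]
      congr 1
      exact Finset.sum_congr rfl fun i _ => by rw [hw i]; ring
    rw [hsplit]
    by_cases hj : j ∈ Shat
    · rw [ha_in j hj, zero_sub, abs_neg]
      linarith [heM j]
    · calc |(1 / (n : ℝ)) * ∑ i, x i j * (y i - ∑ q, x i q * θhat q)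
            - (1 / (n : ℝ)) * ∑ i, ε i * x i j|
          ≤ |(1 / (n : ℝ)) * ∑ i, x i j * (y i - ∑ q, x i q * θhat q)|
            + |(1 / (n : ℝ)) * ∑ i, ε i * x i j| := abs_sub _ _
        _ ≤ Real.sqrt t + M := add_le_add (ha_out j hj) (heM j)
        _ ≤ 2 * M + Real.sqrt t := by linarith
  -- Rayleigh lower bound
  have hray := rayleigh_bound x G hG s (fun j => θ₀ j - θhat j) hcard
  -- rewrite the goal
  have hgoal : ∀ i, (∑ j, x i j * θ₀ j) - ∑ j, x i j * θhat j
      = ∑ j, x i j * (θ₀ j - θhat j) := by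
    intro i
    rw [← Finset.sum_sub_distrib]
    exact Finset.sum_congr rfl fun j _ => by ring
  have hcast : Real.sqrt ((s : ℕ) : ℝ) = Real.sqrt ((shat : ℝ) + s₀) := by
    rw [hs]; push_cast; ring_nf
  simp only [hgoal]
  rw [← hcast]
  exact key_bound x (fun j => θ₀ j - θhat j) s hcard (2 * M + Real.sqrt t)
    (phiMin G s) (by linarith) hφ hφ1 hray hcj
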